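/- Let μ_1, μ_0 be the conditional distributions of X given S=1 and S=0, with m_s := ∫ η(·,s) dμ_s > 0 for s ∈ {0,1}. Let η̂ : ℝ^d × {0,1} → [0,1] be measurable with m̂_s := ∫ η̂(·,s) dμ_s > 0 and μ_s({x : η̂(x,s) = t}) = 0 for every t ∈ (0,1], and let ν_1, ν_0 be probability measures on ℝ^d with ∫ η̂(·,s) dν_s > 0. Let p̂_1, p̂_0 > 0, and for θ ∈ ℝ define ĝ_θ(x,1) := 1{1 ≤ η̂(x,1)·(2 − θ/p̂_1)}, ĝ_θ(x,0) := 1{1 ≤ η̂(x,0)·(2 + θ/p̂_0)}, and Δ̂(ĝ_θ) := |∫ η̂(·,1)ĝ_θ(·,1) dν_1 / ∫ η̂(·,1) dν_1 − ∫ η̂(·,0)ĝ_θ(·,0) dν_0 / ∫ η̂(·,0) dν_0|. If θ̂ ∈ ℝ minimizes θ ↦ Δ̂(ĝ_θ) over ℝ, then the true unfairness satisfies |ℙ(ĝ_{θ̂}(X,S)=1 | S=1,Y=1) − ℙ(ĝ_{θ̂}(X,S)=1 | S=0,Y=1)| ≤ 2·Σ_{s∈{0,1}} ∫ |η(·,s)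 − η̂(·,s)| dμ_s / m_s + 4·Σ_{s∈{0,1}} sup_{t∈[0,1]} |∫ η̂(·,s)·1{t ≤ η̂(·,s)} dμ_s − ∫ η̂(·,s)·1{t ≤ η̂(·,s)} dν_s| / m̂_s. -/

import Mathlib

open MeasureTheory ProbabilityTheory Set Filter


section aux
variable {α : Type*} [MeasurableSpace α] {μ : Measure α}

lemma ll_int_bdd [IsFiniteMeasure μ] {f : α → ℝ} (hf : Measurable f)
    (C : ℝ) (h : ∀ x, |f x| ≤ C) : Integrable f μ :=
  (integrable_const C).mono' hf.aestronglyMeasurable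
    (Filter.Eventually.of_forall (by simpa using h))

lemma ll_arith {a b m n D : ℝ} (hm : 0 < m) (hn : 0 < n) (hb0 : 0 ≤ b) (hbn : b ≤ n)
    (hab : |a - b| ≤ D) (hmn : |m - n| ≤ D) : |a/m - b/n| ≤ 2 * D / m := by
  have key : a/m - b/n = (a-b)/m + (b/n) * ((n-m)/m) := by field_simp; ring
  have h1 : |(a-b)/m| ≤ D/m := by
    rw [abs_div, abs_of_pos hm]; gcongr
  have hbn1 : b/n ≤ 1 := (div_le_one hn).2 hbn
  have hbn0 : 0 ≤ b/n := div_nonneg hb0 hn.le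
  have h2 : |(b/n) * ((n-m)/m)| ≤ D/m := by
    rw [abs_mul, abs_of_nonneg hbn0, abs_div, abs_of_pos hm]
    have : |n - m| = |m - n| := abs_sub_comm _ _
    calc b/n * (|n-m|/m) ≤ 1 * (D/m) := by
          apply mul_le_mul hbn1 _ (by positivity) zero_le_one
          rw [this]; gcongr
      _ = D/m := one_mul _
  calc |a/m - b/n| ≤ |(a-b)/m| + |(b/n)*((n-m)/m)| := by rw [key]; exact abs_add_le _ _
    _ ≤ D/m + D/m := add_le_add h1 h2
    _ = 2*D/m := by ring

lemma ll_no {q c : ℝ} (hq0 : 0 ≤ q) (hq1 : q ≤ 1) (hc : c < 1) : ¬ (1 ≤ q * c) := by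
  intro h
  have h2 : q * c ≤ q := by nlinarith
  have hq : q = 1 := le_antisymm hq1 (le_trans h h2)
  rw [hq, one_mul] at h; linarith

lemma ll_meas_ind {q : α → ℝ} (hq : Measurable q) (t : ℝ) :
    Measurable (fun x => q x * (if t ≤ q x then (1:ℝ) else 0)) :=
  hq.mul (Measurable.ite (measurableSet_le measurable_const hq) measurable_const measurable_const)

lemma ll_meas_ind2 {q : α → ℝ} (hq : Measurable q) (c : ℝ) :
    Measurable (fun x => q x * (if 1 ≤ q x * c then (1:ℝ) else 0)) :=
  hq.mul (Measurable.ite (measurableSet_le measurable_const (hq.mul_const c))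
    measurable_const measurable_const)

variable [IsProbabilityMeasure μ] {q : α → ℝ}

lemma ll_int_ind (hq : Measurable q) (hq01 : ∀ x, q x ∈ Icc (0:ℝ) 1) (t : ℝ) :
    Integrable (fun x => q x * (if t ≤ q x then (1:ℝ) else 0)) μ := by
  apply ll_int_bdd (ll_meas_ind hq t) 1
  intro x
  rcases hq01 x with ⟨h0, h1⟩
  rw [abs_mul]
  split <;> simp [abs_of_nonneg h0, h1, abs_of_nonneg, mul_nonneg h0, h0]

lemma ll_int_ind2 (hq : Measurable q) (hq01 : ∀ x, q x ∈ Icc (0:ℝ) 1) (c : ℝ) :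
    Integrable (fun x => q x * (if 1 ≤ q x * c then (1:ℝ) else 0)) μ := by
  apply ll_int_bdd (ll_meas_ind2 hq c) 1
  intro x
  rcases hq01 x with ⟨h0, h1⟩
  rw [abs_mul]
  split <;> simp [abs_of_nonneg h0, h1, abs_of_nonneg, h0]

lemma ll_int_q (hq : Measurable q) (hq01 : ∀ x, q x ∈ Icc (0:ℝ) 1) : Integrable q μ :=
  ll_int_bdd hq 1 (fun x => abs_le.2 ⟨by linarith [(hq01 x).1], (hq01 x).2⟩)

lemma ll_F_nonneg (t : ℝ) (hq01 : ∀ x, q x ∈ Icc (0:ℝ) 1) :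
    0 ≤ ∫ x, q x * (if t ≤ q x then (1:ℝ) else 0) ∂μ := by
  apply integral_nonneg
  intro x
  have := (hq01 x).1
  dsimp only
  split <;> simp [this]

lemma ll_F_le (hq : Measurable q) (hq01 : ∀ x, q x ∈ Icc (0:ℝ) 1) (t : ℝ) :
    ∫ x, q x * (if t ≤ q x then (1:ℝ) else 0) ∂μ ≤ ∫ x, q x ∂μ := by
  apply integral_mono (ll_int_ind hq hq01 t) (ll_int_q hq hq01)
  intro x
  have h0 := (hq01 x).1
  dsimp only
  split <;> simp [h0]

lemma ll_int_q_le_one (hq : Measurable q) (hq01 : ∀ x, q x ∈ Icc (0:ℝ) 1) :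
    ∫ x, q x ∂μ ≤ 1 := by
  calc ∫ x, q x ∂μ ≤ ∫ _x, (1:ℝ) ∂μ :=
        integral_mono (ll_int_q hq hq01) (integrable_const 1) (fun x => (hq01 x).2)
    _ = 1 := by simp

omit [IsProbabilityMeasure μ] in
lemma ll_F_zero (hq01 : ∀ x, q x ∈ Icc (0:ℝ) 1) :
    ∫ x, q x * (if (0:ℝ) ≤ q x then (1:ℝ) else 0) ∂μ = ∫ x, q x ∂μ := by
  congr 1; funext x; rw [if_pos (hq01 x).1, mul_one]

lemma ll_F_eq (hq01 : ∀ x, q x ∈ Icc (0:ℝ) 1) (c : ℝ) :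
    ∫ x, q x * (if 1 ≤ q x * c then (1:ℝ) else 0) ∂μ
      = if 1 ≤ c then ∫ x, q x * (if 1/c ≤ q x then (1:ℝ) else 0) ∂μ else 0 := by
  rcases le_or_gt 1 c with hc | hc
  · rw [if_pos hc]
    congr 1; funext x
    have hcpos : (0:ℝ) < c := lt_of_lt_of_le one_pos hc
    have : (1 ≤ q x * c) ↔ (1/c ≤ q x) := by
      rw [div_le_iff₀ hcpos]
    simp only [this]
  · rw [if_neg (not_le.2 hc)]
    have : ∀ x, q x * (if 1 ≤ q x * c then (1:ℝ) else 0) = 0 := by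
      intro x
      rw [if_neg (ll_no (hq01 x).1 (hq01 x).2 hc), mul_zero]
    simp only [this, integral_zero]

lemma ll_cont (hq : Measurable q) (hq01 : ∀ x, q x ∈ Icc (0:ℝ) 1)
    (hatom : ∀ t ∈ Ioc (0:ℝ) 1, μ {x | q x = t} = 0) :
    Continuous fun r : ℝ => ∫ x, q x * (if 1 ≤ q x * r then (1:ℝ) else 0) ∂μ := by
  apply SeqContinuous.continuous
  intro rs r hrs
  have hrs' : Tendsto rs atTop (nhds r) := hrs
  apply tendsto_integral_of_dominated_convergence (fun _ => (1:ℝ))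
  · exact fun n => (ll_meas_ind2 hq (rs n)).aestronglyMeasurable
  · exact integrable_const 1
  · intro n
    apply Eventually.of_forall
    intro x
    rcases hq01 x with ⟨h0, h1⟩
    rw [Real.norm_eq_abs, abs_mul]
    split <;> simp [abs_of_nonneg h0, h1]
  · -- a.e. convergence
    have hN : μ {x | q x * r = 1} = 0 := by
      rcases le_or_gt 1 r with hr | hr
      · have hrpos : (0:ℝ) < r := lt_of_lt_of_le one_pos hr
        have : {x | q x * r = 1} = {x | q x = 1/r} := by
          ext x; simp only [mem_setOf_eq]
          constructor
          · intro h; field_simp; linarith [h]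
          · intro h; rw [h]; field_simp
        rw [this]
        exact hatom (1/r) ⟨by positivity, by rw [div_le_one hrpos]; exact hr⟩
      · have : {x | q x * r = 1} = ∅ := by
          ext x; simp only [mem_setOf_eq, mem_empty_iff_false, iff_false]
          intro h
          exact ll_no (hq01 x).1 (hq01 x).2 hr h.ge
        rw [this]; exact measure_empty
    rw [← compl_compl {x | q x * r = 1}] at hN
    apply (eventually_iff_exists_mem.2 ⟨_, mem_ae_iff.2 hN, ?_⟩)
    intro x hx
    simp only [mem_compl_iff, mem_setOf_eq] at hx
    have htend : Tendsto (fun n => q x * rs n) atTop (nhds (q x * r)) :=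
      tendsto_const_nhds.mul hrs'
    rcases lt_or_gt_of_ne hx with h | h
    · -- q x * r < 1
      have hev : ∀ᶠ n in atTop, q x * rs n < 1 := htend.eventually_lt_const h
      have heq : (fun n => q x * (if 1 ≤ q x * rs n then (1:ℝ) else 0))
          =ᶠ[atTop] (fun _ => (0:ℝ)) := by
        filter_upwards [hev] with n hn
        rw [if_neg (not_le.2 hn), mul_zero]
      rw [show q x * (if 1 ≤ q x * r then (1:ℝ) else 0) = 0 by
        rw [if_neg (not_le.2 h), mul_zero]]
      exact Tendsto.congr' heq.symm tendsto_const_nhds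
    · -- 1 < q x * r
      have hev : ∀ᶠ n in atTop, 1 < q x * rs n := htend.eventually_const_lt h
      have heq : (fun n => q x * (if 1 ≤ q x * rs n then (1:ℝ) else 0))
          =ᶠ[atTop] (fun _ => q x) := by
        filter_upwards [hev] with n hn
        rw [if_pos hn.le, mul_one]
      rw [show q x * (if 1 ≤ q x * r then (1:ℝ) else 0) = q x by
        rw [if_pos h.le, mul_one]]
      exact Tendsto.congr' heq.symm tendsto_const_nhds

lemma ll_step3 {β : Type*} [MeasurableSpace β] (ν : Measure β) [IsProbabilityMeasure ν]
    {p : β → ℝ} (hp : Measurable p) (hp01 : ∀ x, p x ∈ Icc (0:ℝ) 1)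
    (hq : Measurable q) (hq01 : ∀ x, q x ∈ Icc (0:ℝ) 1)
    (hm : 0 < ∫ x, q x ∂μ) (hn : 0 < ∫ x, p x ∂ν) (c : ℝ) :
    |(∫ x, q x * (if 1 ≤ q x * c then (1:ℝ) else 0) ∂μ) / (∫ x, q x ∂μ)
      - (∫ x, p x * (if 1 ≤ p x * c then (1:ℝ) else 0) ∂ν) / (∫ x, p x ∂ν)|
    ≤ 2 * (⨆ t ∈ Icc (0:ℝ) 1,
        |(∫ x, q x * (if t ≤ q x then (1:ℝ) else 0) ∂μ)
          - (∫ x, p x * (if t ≤ p x then (1:ℝ) else 0) ∂ν)|) / (∫ x, q x ∂μ) := by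
  set Fq : ℝ → ℝ := fun t => ∫ x, q x * (if t ≤ q x then (1:ℝ) else 0) ∂μ with hFq
  set Fp : ℝ → ℝ := fun t => ∫ x, p x * (if t ≤ p x then (1:ℝ) else 0) ∂ν with hFp
  set E : ℝ := ⨆ t ∈ Icc (0:ℝ) 1, |Fq t - Fp t| with hE
  have hq1 : ∫ x, q x ∂μ ≤ 1 := ll_int_q_le_one hq hq01
  have hp1 : ∫ x, p x ∂ν ≤ 1 := ll_int_q_le_one hp hp01
  have hw2 : ∀ t, |Fq t - Fp t| ≤ 2 := by
    intro t
    have h1 := ll_F_nonneg (μ := μ) t hq01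
    have h2 := ll_F_nonneg (μ := ν) t hp01
    have h3 := (ll_F_le hq hq01 t).trans hq1
    have h4 := (ll_F_le hp hp01 t).trans hp1
    rw [abs_le]; constructor <;> [linarith; linarith]
  have hbdd : BddAbove (range fun t : ℝ => ⨆ _ : t ∈ Icc (0:ℝ) 1, |Fq t - Fp t|) := by
    refine ⟨2, ?_⟩
    rintro _ ⟨u, rfl⟩
    exact Real.iSup_le (fun _ => hw2 u) (by norm_num)
  have hEge : ∀ t ∈ Icc (0:ℝ) 1, |Fq t - Fp t| ≤ E := by
    intro t ht
    rw [hE]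
    have h1 : (⨆ _ : t ∈ Icc (0:ℝ) 1, |Fq t - Fp t|) = |Fq t - Fp t| := ciSup_pos ht
    rw [← h1]
    exact le_ciSup hbdd t
  have hE0 : 0 ≤ E := le_trans (abs_nonneg _) (hEge 0 ⟨le_refl 0, zero_le_one⟩)
  have hmn : |(∫ x, q x ∂μ) - (∫ x, p x ∂ν)| ≤ E := by
    have h0 := hEge 0 ⟨le_refl 0, zero_le_one⟩
    have e1 : Fq 0 = ∫ x, q x ∂μ := ll_F_zero hq01
    have e2 : Fp 0 = ∫ x, p x ∂ν := ll_F_zero hp01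
    rwa [e1, e2] at h0
  rcases le_or_gt 1 c with hc | hc
  · have hcpos : (0:ℝ) < c := lt_of_lt_of_le one_pos hc
    have hmem : 1/c ∈ Icc (0:ℝ) 1 := ⟨by positivity, by rw [div_le_one hcpos]; exact hc⟩
    rw [ll_F_eq hq01 c, ll_F_eq hp01 c, if_pos hc, if_pos hc]
    exact ll_arith hm hn (ll_F_nonneg _ hp01) (ll_F_le hp hp01 _) (hEge _ hmem) hmn
  · rw [ll_F_eq hq01 c, ll_F_eq hp01 c, if_neg (not_le.2 hc), if_neg (not_le.2 hc)]
    simp only [zero_div, sub_zero, abs_zero]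
    positivity

lemma ll_abs_int {f : α → ℝ} : |∫ x, f x ∂μ| ≤ ∫ x, |f x| ∂μ := by
  simpa [Real.norm_eq_abs] using norm_integral_le_integral_norm (μ := μ) f

lemma ll_step2 {f g i : α → ℝ} (hf : Measurable f) (hg : Measurable g) (hi : Measurable i)
    (hf01 : ∀ x, f x ∈ Icc (0:ℝ) 1) (hg01 : ∀ x, g x ∈ Icc (0:ℝ) 1)
    (hi01 : ∀ x, i x ∈ Icc (0:ℝ) 1)
    (hm : 0 < ∫ x, f x ∂μ) (hmh : 0 < ∫ x, g x ∂μ) :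
    |(∫ x, f x * i x ∂μ) / (∫ x, f x ∂μ) - (∫ x, g x * i x ∂μ) / (∫ x, g x ∂μ)|
      ≤ 2 * (∫ x, |f x - g x| ∂μ) / (∫ x, f x ∂μ) := by
  have bdd_prod : ∀ (u v : α → ℝ), (∀ x, u x ∈ Icc (0:ℝ) 1) → (∀ x, v x ∈ Icc (0:ℝ) 1) →
      ∀ x, |u x * v x| ≤ 1 := by
    intro u v hu hv x
    rw [abs_mul, abs_of_nonneg (hu x).1, abs_of_nonneg (hv x).1]
    calc u x * v x ≤ 1 * 1 := mul_le_mul (hu x).2 (hv x).2 (hv x).1 zero_le_one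
      _ = 1 := one_mul 1
  have int_fi : Integrable (fun x => f x * i x) μ :=
    ll_int_bdd (hf.mul hi) 1 (bdd_prod f i hf01 hi01)
  have int_gi : Integrable (fun x => g x * i x) μ :=
    ll_int_bdd (hg.mul hi) 1 (bdd_prod g i hg01 hi01)
  have int_f : Integrable f μ := ll_int_q hf hf01
  have int_g : Integrable g μ := ll_int_q hg hg01
  have int_abs : Integrable (fun x => |f x - g x|) μ := by
    apply ll_int_bdd (hf.sub hg).abs 1
    intro x
    rw [abs_abs, abs_le, Pi.sub_apply]
    constructor <;> [linarith [(hf01 x).1, (hg01 x).2]; linarith [(hf01 x).2, (hg01 x).1]]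
  have hab : |(∫ x, f x * i x ∂μ) - (∫ x, g x * i x ∂μ)| ≤ ∫ x, |f x - g x| ∂μ := by
    rw [← integral_sub int_fi int_gi]
    calc |∫ x, (f x * i x - g x * i x) ∂μ| ≤ ∫ x, |f x * i x - g x * i x| ∂μ :=
          ll_abs_int
      _ ≤ ∫ x, |f x - g x| ∂μ := by
          apply integral_mono (int_fi.sub int_gi).abs int_abs
          intro x
          simp only [Pi.sub_apply]
          rw [← sub_mul, abs_mul]
          calc |f x - g x| * |i x| ≤ |f x - g x| * 1 := by
                apply mul_le_mul_of_nonneg_left _ (abs_nonneg _)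
                rw [abs_of_nonneg (hi01 x).1]; exact (hi01 x).2
            _ = |f x - g x| := mul_one _
  have hmn : |(∫ x, f x ∂μ) - (∫ x, g x ∂μ)| ≤ ∫ x, |f x - g x| ∂μ := by
    rw [← integral_sub int_f int_g]
    exact ll_abs_int
  have hb0 : 0 ≤ ∫ x, g x * i x ∂μ :=
    integral_nonneg (fun x => mul_nonneg (hg01 x).1 (hi01 x).1)
  have hbn : (∫ x, g x * i x ∂μ) ≤ ∫ x, g x ∂μ := by
    apply integral_mono int_gi int_g
    intro x
    dsimp only
    calc g x * i x ≤ g x * 1 := mul_le_mul_of_nonneg_left (hi01 x).2 (hg01 x).1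
      _ = g x := mul_one _
  exact ll_arith hm hmh hb0 hbn hab hmn

omit [IsProbabilityMeasure μ] in
lemma ll_integral_cond (A : Set α) (f : α → ℝ) :
    ∫ x, f x ∂(ProbabilityTheory.cond μ A) = (μ A).toReal⁻¹ * ∫ x in A, f x ∂μ := by
  rw [ProbabilityTheory.cond, integral_smul_measure, ENNReal.toReal_inv, smul_eq_mul]

lemma ll_K_nonneg (hq01 : ∀ x, q x ∈ Icc (0:ℝ) 1) (c : ℝ) :
    0 ≤ ∫ x, q x * (if 1 ≤ q x * c then (1:ℝ) else 0) ∂μ := by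
  apply integral_nonneg
  intro x
  have := (hq01 x).1
  dsimp only
  split <;> simp [this]

lemma ll_ivt {β : Type*} [MeasurableSpace β]
    (ν : Measure β) [IsProbabilityMeasure ν]
    {p : β → ℝ} (hq1 : Measurable q) (hq0 : Measurable p)
    (hq1_01 : ∀ x, q x ∈ Icc (0:ℝ) 1) (hq0_01 : ∀ x, p x ∈ Icc (0:ℝ) 1)
    (hatom1 : ∀ t ∈ Ioc (0:ℝ) 1, μ {x | q x = t} = 0)
    (hatom0 : ∀ t ∈ Ioc (0:ℝ) 1, ν {x | p x = t} = 0)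
    (mh1 mh0 ph1 ph0 : ℝ) (hmh1 : 0 < mh1) (hmh0 : 0 < mh0)
    (hph1 : 0 < ph1) (hph0 : 0 < ph0) :
    ∃ θ : ℝ, (∫ x, q x * (if 1 ≤ q x * (2 - θ/ph1) then (1:ℝ) else 0) ∂μ) / mh1
      = (∫ x, p x * (if 1 ≤ p x * (2 + θ/ph0) then (1:ℝ) else 0) ∂ν) / mh0 := by
  set K1 : ℝ → ℝ := fun θ => ∫ x, q x * (if 1 ≤ q x * (2 - θ/ph1) then (1:ℝ) else 0) ∂μ
    with hK1
  set K0 : ℝ → ℝ := fun θ => ∫ x, p x * (if 1 ≤ p x * (2 + θ/ph0) then (1:ℝ) else 0) ∂ν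
    with hK0
  have hK1cont : Continuous K1 := by
    have h := ll_cont (μ := μ) hq1 hq1_01 hatom1
    exact h.comp (continuous_const.sub (continuous_id.div_const ph1))
  have hK0cont : Continuous K0 := by
    have h := ll_cont (μ := ν) hq0 hq0_01 hatom0
    exact h.comp (continuous_const.add (continuous_id.div_const ph0))
  have hK1nn : ∀ θ, 0 ≤ K1 θ := fun θ => ll_K_nonneg hq1_01 _
  have hK0nn : ∀ θ, 0 ≤ K0 θ := fun θ => ll_K_nonneg hq0_01 _
  have hK1b : K1 (2*ph1) = 0 := by
    rw [hK1]
    dsimp only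
    rw [show (2:ℝ) - (2*ph1)/ph1 = 0 by field_simp; ring]
    rw [ll_F_eq hq1_01 0, if_neg (by norm_num)]
  have hK0a : K0 (-(2*ph0)) = 0 := by
    rw [hK0]
    dsimp only
    rw [show (2:ℝ) + (-(2*ph0))/ph0 = 0 by field_simp; ring]
    rw [ll_F_eq hq0_01 0, if_neg (by norm_num)]
  set h : ℝ → ℝ := fun θ => K1 θ / mh1 - K0 θ / mh0 with hh
  have hcont : Continuous h := (hK1cont.div_const mh1).sub (hK0cont.div_const mh0)
  have hab : -(2*ph0) ≤ 2*ph1 := by linarith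
  have h1 : h (2*ph1) ≤ 0 := by
    rw [hh]; dsimp only
    rw [hK1b]
    simp only [zero_div]
    have := div_nonneg (hK0nn (2*ph1)) hmh0.le
    linarith
  have h2 : 0 ≤ h (-(2*ph0)) := by
    rw [hh]; dsimp only
    rw [hK0a]
    simp only [zero_div]
    have := div_nonneg (hK1nn (-(2*ph0))) hmh1.le
    linarith
  obtain ⟨θs, _, hθs⟩ := intermediate_value_Icc' hab hcont.continuousOn ⟨h1, h2⟩
  refine ⟨θs, ?_⟩
  have : K1 θs / mh1 - K0 θs / mh0 = 0 := hθs
  linarith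

end aux

lemma ll_analysis {α β : Type*} [MeasurableSpace α] [MeasurableSpace β]
    (μ1 μ0 : Measure α) (ν1 ν0 : Measure β)
    [IsProbabilityMeasure μ1] [IsProbabilityMeasure μ0]
    [IsProbabilityMeasure ν1] [IsProbabilityMeasure ν0]
    {f1 f0 q1 q0 : α → ℝ} {p1 p0 : β → ℝ}
    (hf1 : Measurable f1) (hf0 : Measurable f0) (hq1 : Measurable q1) (hq0 : Measurable q0)
    (hp1 : Measurable p1) (hp0 : Measurable p0)
    (hf1_01 : ∀ x, f1 x ∈ Icc (0:ℝ) 1) (hf0_01 : ∀ x, f0 x ∈ Icc (0:ℝ) 1)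
    (hq1_01 : ∀ x, q1 x ∈ Icc (0:ℝ) 1) (hq0_01 : ∀ x, q0 x ∈ Icc (0:ℝ) 1)
    (hp1_01 : ∀ x, p1 x ∈ Icc (0:ℝ) 1) (hp0_01 : ∀ x, p0 x ∈ Icc (0:ℝ) 1)
    (hatom1 : ∀ t ∈ Ioc (0:ℝ) 1, μ1 {x | q1 x = t} = 0)
    (hatom0 : ∀ t ∈ Ioc (0:ℝ) 1, μ0 {x | q0 x = t} = 0)
    (m1 m0 mh1 mh0 ph1 ph0 : ℝ)
    (hm1 : m1 = ∫ x, f1 x ∂μ1) (hm0 : m0 = ∫ x, f0 x ∂μ0)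
    (hmh1 : mh1 = ∫ x, q1 x ∂μ1) (hmh0 : mh0 = ∫ x, q0 x ∂μ0)
    (hm1p : 0 < m1) (hm0p : 0 < m0) (hmh1p : 0 < mh1) (hmh0p : 0 < mh0)
    (hph1 : 0 < ph1) (hph0 : 0 < ph0)
    (hn1 : 0 < ∫ x, p1 x ∂ν1) (hn0 : 0 < ∫ x, p0 x ∂ν0)
    (θh : ℝ)
    (hθh : ∀ θ : ℝ,
      |(∫ x, p1 x * (if 1 ≤ p1 x * (2 - θh/ph1) then (1:ℝ) else 0) ∂ν1) / (∫ x, p1 x ∂ν1)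
        - (∫ x, p0 x * (if 1 ≤ p0 x * (2 + θh/ph0) then (1:ℝ) else 0) ∂ν0)
            / (∫ x, p0 x ∂ν0)|
      ≤ |(∫ x, p1 x * (if 1 ≤ p1 x * (2 - θ/ph1) then (1:ℝ) else 0) ∂ν1) / (∫ x, p1 x ∂ν1)
        - (∫ x, p0 x * (if 1 ≤ p0 x * (2 + θ/ph0) then (1:ℝ) else 0) ∂ν0)
            / (∫ x, p0 x ∂ν0)|) :
    |(∫ x, f1 x * (if 1 ≤ q1 x * (2 - θh/ph1) then (1:ℝ) else 0) ∂μ1) / m1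
      - (∫ x, f0 x * (if 1 ≤ q0 x * (2 + θh/ph0) then (1:ℝ) else 0) ∂μ0) / m0|
    ≤ 2 * ((∫ x, |f1 x - q1 x| ∂μ1) / m1 + (∫ x, |f0 x - q0 x| ∂μ0) / m0)
      + 4 * ((⨆ t ∈ Icc (0:ℝ) 1,
            |(∫ x, q1 x * (if t ≤ q1 x then (1:ℝ) else 0) ∂μ1)
              - (∫ x, p1 x * (if t ≤ p1 x then (1:ℝ) else 0) ∂ν1)|) / mh1
          + (⨆ t ∈ Icc (0:ℝ) 1,
            |(∫ x, q0 x * (if t ≤ q0 x then (1:ℝ) else 0) ∂μ0)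
              - (∫ x, p0 x * (if t ≤ p0 x then (1:ℝ) else 0) ∂ν0)|) / mh0) := by
  have hi1m : Measurable fun x => if 1 ≤ q1 x * (2 - θh/ph1) then (1:ℝ) else 0 :=
    Measurable.ite (measurableSet_le measurable_const (hq1.mul_const _))
      measurable_const measurable_const
  have hi0m : Measurable fun x => if 1 ≤ q0 x * (2 + θh/ph0) then (1:ℝ) else 0 :=
    Measurable.ite (measurableSet_le measurable_const (hq0.mul_const _))
      measurable_const measurable_const
  have hi1_01 : ∀ x, (if 1 ≤ q1 x * (2 - θh/ph1) then (1:ℝ) else 0) ∈ Icc (0:ℝ) 1 := by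
    intro x; split <;> norm_num
  have hi0_01 : ∀ x, (if 1 ≤ q0 x * (2 + θh/ph0) then (1:ℝ) else 0) ∈ Icc (0:ℝ) 1 := by
    intro x; split <;> norm_num
  -- step 2 bounds
  have h1 : |(∫ x, f1 x * (if 1 ≤ q1 x * (2 - θh/ph1) then (1:ℝ) else 0) ∂μ1) / m1
      - (∫ x, q1 x * (if 1 ≤ q1 x * (2 - θh/ph1) then (1:ℝ) else 0) ∂μ1) / mh1|
      ≤ 2 * (∫ x, |f1 x - q1 x| ∂μ1) / m1 := by
    rw [hm1, hmh1]
    exact ll_step2 hf1 hq1 hi1m hf1_01 hq1_01 hi1_01 (hm1 ▸ hm1p) (hmh1 ▸ hmh1p)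
  have h4 : |(∫ x, f0 x * (if 1 ≤ q0 x * (2 + θh/ph0) then (1:ℝ) else 0) ∂μ0) / m0
      - (∫ x, q0 x * (if 1 ≤ q0 x * (2 + θh/ph0) then (1:ℝ) else 0) ∂μ0) / mh0|
      ≤ 2 * (∫ x, |f0 x - q0 x| ∂μ0) / m0 := by
    rw [hm0, hmh0]
    exact ll_step2 hf0 hq0 hi0m hf0_01 hq0_01 hi0_01 (hm0 ▸ hm0p) (hmh0 ▸ hmh0p)
  -- step 3 bounds (for arbitrary θ)
  have h2 : ∀ θ : ℝ, |(∫ x, q1 x * (if 1 ≤ q1 x * (2 - θ/ph1) then (1:ℝ) else 0) ∂μ1) / mh1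
      - (∫ x, p1 x * (if 1 ≤ p1 x * (2 - θ/ph1) then (1:ℝ) else 0) ∂ν1) / (∫ x, p1 x ∂ν1)|
      ≤ 2 * (⨆ t ∈ Icc (0:ℝ) 1,
          |(∫ x, q1 x * (if t ≤ q1 x then (1:ℝ) else 0) ∂μ1)
            - (∫ x, p1 x * (if t ≤ p1 x then (1:ℝ) else 0) ∂ν1)|) / mh1 := by
    intro θ
    rw [hmh1]
    exact ll_step3 ν1 hp1 hp1_01 hq1 hq1_01 (hmh1 ▸ hmh1p) hn1 _
  have h3 : ∀ θ : ℝ, |(∫ x, q0 x * (if 1 ≤ q0 x * (2 + θ/ph0) then (1:ℝ) else 0) ∂μ0) / mh0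
      - (∫ x, p0 x * (if 1 ≤ p0 x * (2 + θ/ph0) then (1:ℝ) else 0) ∂ν0) / (∫ x, p0 x ∂ν0)|
      ≤ 2 * (⨆ t ∈ Icc (0:ℝ) 1,
          |(∫ x, q0 x * (if t ≤ q0 x then (1:ℝ) else 0) ∂μ0)
            - (∫ x, p0 x * (if t ≤ p0 x then (1:ℝ) else 0) ∂ν0)|) / mh0 := by
    intro θ
    rw [hmh0]
    exact ll_step3 ν0 hp0 hp0_01 hq0 hq0_01 (hmh0 ▸ hmh0p) hn0 _
  -- IVT
  obtain ⟨θs, hθs⟩ := ll_ivt (μ := μ1) (q := q1) μ0 (p := q0) hq1 hq0 hq1_01 hq0_01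
    hatom1 hatom0 mh1 mh0 ph1 ph0 hmh1p hmh0p hph1 hph0
  -- bound on the empirical unfairness at θh
  have h7 := hθh θs
  have h8 : |(∫ x, p1 x * (if 1 ≤ p1 x * (2 - θs/ph1) then (1:ℝ) else 0) ∂ν1) / (∫ x, p1 x ∂ν1)
      - (∫ x, p0 x * (if 1 ≤ p0 x * (2 + θs/ph0) then (1:ℝ) else 0) ∂ν0) / (∫ x, p0 x ∂ν0)|
      ≤ |(∫ x, p1 x * (if 1 ≤ p1 x * (2 - θs/ph1) then (1:ℝ) else 0) ∂ν1) / (∫ x, p1 x ∂ν1)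
          - (∫ x, q1 x * (if 1 ≤ q1 x * (2 - θs/ph1) then (1:ℝ) else 0) ∂μ1) / mh1|
        + |(∫ x, q0 x * (if 1 ≤ q0 x * (2 + θs/ph0) then (1:ℝ) else 0) ∂μ0) / mh0
          - (∫ x, p0 x * (if 1 ≤ p0 x * (2 + θs/ph0) then (1:ℝ) else 0) ∂ν0) / (∫ x, p0 x ∂ν0)| := by
    calc _ ≤ |(∫ x, p1 x * (if 1 ≤ p1 x * (2 - θs/ph1) then (1:ℝ) else 0) ∂ν1) / (∫ x, p1 x ∂ν1)
          - (∫ x, q1 x * (if 1 ≤ q1 x * (2 - θs/ph1) then (1:ℝ) else 0) ∂μ1) / mh1|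
        + |(∫ x, q1 x * (if 1 ≤ q1 x * (2 - θs/ph1) then (1:ℝ) else 0) ∂μ1) / mh1
          - (∫ x, p0 x * (if 1 ≤ p0 x * (2 + θs/ph0) then (1:ℝ) else 0) ∂ν0) / (∫ x, p0 x ∂ν0)| :=
        abs_sub_le _ _ _
      _ = _ := by rw [hθs]
  have h5 := h2 θs
  have h6 := h3 θs
  have h5' : |(∫ x, p1 x * (if 1 ≤ p1 x * (2 - θs/ph1) then (1:ℝ) else 0) ∂ν1) / (∫ x, p1 x ∂ν1)
      - (∫ x, q1 x * (if 1 ≤ q1 x * (2 - θs/ph1) then (1:ℝ) else 0) ∂μ1) / mh1|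
      ≤ 2 * (⨆ t ∈ Icc (0:ℝ) 1,
          |(∫ x, q1 x * (if t ≤ q1 x then (1:ℝ) else 0) ∂μ1)
            - (∫ x, p1 x * (if t ≤ p1 x then (1:ℝ) else 0) ∂ν1)|) / mh1 := by
    rw [abs_sub_comm]; exact h5
  -- triangle inequality chain for the main quantity
  have g1 := abs_sub_le ((∫ x, f1 x * (if 1 ≤ q1 x * (2 - θh/ph1) then (1:ℝ) else 0) ∂μ1) / m1)
    ((∫ x, q1 x * (if 1 ≤ q1 x * (2 - θh/ph1) then (1:ℝ) else 0) ∂μ1) / mh1)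
    ((∫ x, f0 x * (if 1 ≤ q0 x * (2 + θh/ph0) then (1:ℝ) else 0) ∂μ0) / m0)
  have g2 := abs_sub_le ((∫ x, q1 x * (if 1 ≤ q1 x * (2 - θh/ph1) then (1:ℝ) else 0) ∂μ1) / mh1)
    ((∫ x, p1 x * (if 1 ≤ p1 x * (2 - θh/ph1) then (1:ℝ) else 0) ∂ν1) / (∫ x, p1 x ∂ν1))
    ((∫ x, f0 x * (if 1 ≤ q0 x * (2 + θh/ph0) then (1:ℝ) else 0) ∂μ0) / m0)
  have g3 := abs_sub_le ((∫ x, p1 x * (if 1 ≤ p1 x * (2 - θh/ph1) then (1:ℝ) else 0) ∂ν1) / (∫ x, p1 x ∂ν1))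
    ((∫ x, p0 x * (if 1 ≤ p0 x * (2 + θh/ph0) then (1:ℝ) else 0) ∂ν0) / (∫ x, p0 x ∂ν0))
    ((∫ x, f0 x * (if 1 ≤ q0 x * (2 + θh/ph0) then (1:ℝ) else 0) ∂μ0) / m0)
  have g4 := abs_sub_le ((∫ x, p0 x * (if 1 ≤ p0 x * (2 + θh/ph0) then (1:ℝ) else 0) ∂ν0) / (∫ x, p0 x ∂ν0))
    ((∫ x, q0 x * (if 1 ≤ q0 x * (2 + θh/ph0) then (1:ℝ) else 0) ∂μ0) / mh0)
    ((∫ x, f0 x * (if 1 ≤ q0 x * (2 + θh/ph0) then (1:ℝ) else 0) ∂μ0) / m0)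
  have g5 : |(∫ x, p0 x * (if 1 ≤ p0 x * (2 + θh/ph0) then (1:ℝ) else 0) ∂ν0) / (∫ x, p0 x ∂ν0)
      - (∫ x, q0 x * (if 1 ≤ q0 x * (2 + θh/ph0) then (1:ℝ) else 0) ∂μ0) / mh0|
      = |(∫ x, q0 x * (if 1 ≤ q0 x * (2 + θh/ph0) then (1:ℝ) else 0) ∂μ0) / mh0
      - (∫ x, p0 x * (if 1 ≤ p0 x * (2 + θh/ph0) then (1:ℝ) else 0) ∂ν0) / (∫ x, p0 x ∂ν0)| :=
    abs_sub_comm _ _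
  have g6 : |(∫ x, q0 x * (if 1 ≤ q0 x * (2 + θh/ph0) then (1:ℝ) else 0) ∂μ0) / mh0
      - (∫ x, f0 x * (if 1 ≤ q0 x * (2 + θh/ph0) then (1:ℝ) else 0) ∂μ0) / m0|
      = |(∫ x, f0 x * (if 1 ≤ q0 x * (2 + θh/ph0) then (1:ℝ) else 0) ∂μ0) / m0
      - (∫ x, q0 x * (if 1 ≤ q0 x * (2 + θh/ph0) then (1:ℝ) else 0) ∂μ0) / mh0| :=
    abs_sub_comm _ _
  have h2h := h2 θh
  have h3h := h3 θh
  have e1 : 2 * (∫ x, |f1 x - q1 x| ∂μ1) / m1 = 2 * ((∫ x, |f1 x - q1 x| ∂μ1) / m1) :=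
    mul_div_assoc _ _ _
  have e2 : 2 * (∫ x, |f0 x - q0 x| ∂μ0) / m0 = 2 * ((∫ x, |f0 x - q0 x| ∂μ0) / m0) :=
    mul_div_assoc _ _ _
  have e3 : 2 * (⨆ t ∈ Icc (0:ℝ) 1,
          |(∫ x, q1 x * (if t ≤ q1 x then (1:ℝ) else 0) ∂μ1)
            - (∫ x, p1 x * (if t ≤ p1 x then (1:ℝ) else 0) ∂ν1)|) / mh1
      = 2 * ((⨆ t ∈ Icc (0:ℝ) 1,
          |(∫ x, q1 x * (if t ≤ q1 x then (1:ℝ) else 0) ∂μ1)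
            - (∫ x, p1 x * (if t ≤ p1 x then (1:ℝ) else 0) ∂ν1)|) / mh1) :=
    mul_div_assoc _ _ _
  have e4 : 2 * (⨆ t ∈ Icc (0:ℝ) 1,
          |(∫ x, q0 x * (if t ≤ q0 x then (1:ℝ) else 0) ∂μ0)
            - (∫ x, p0 x * (if t ≤ p0 x then (1:ℝ) else 0) ∂ν0)|) / mh0
      = 2 * ((⨆ t ∈ Icc (0:ℝ) 1,
          |(∫ x, q0 x * (if t ≤ q0 x then (1:ℝ) else 0) ∂μ0)
            - (∫ x, p0 x * (if t ≤ p0 x then (1:ℝ) else 0) ∂ν0)|) / mh0) :=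
    mul_div_assoc _ _ _
  linarith [h1, h4, h2h, h3h, h5', h6, h7, h8, g1, g2, g3, g4, g5, g6, e1, e2, e3, e4]



theorem stmt_14 {d : ℕ} {Ω : Type*} [MeasurableSpace Ω]
    (P : Measure Ω) [IsProbabilityMeasure P]
    (X : Ω → (Fin d → ℝ)) (S Y : Ω → Bool)
    (hX : Measurable X) (hS : Measurable S) (hY : Measurable Y)
    (hSnd : 0 < P {ω | S ω = true} ∧ P {ω | S ω = true} < 1)
    (hYS : ∀ s : Bool, 0 < P {ω | Y ω = true ∧ S ω = s})
    (η : (Fin d → ℝ) → Bool → ℝ)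
    (hηm : Measurable (fun p : (Fin d → ℝ) × Bool => η p.1 p.2))
    (hη01 : ∀ x s, η x s ∈ Icc (0:ℝ) 1)
    (hreg : ∀ φ : (Fin d → ℝ) × Bool → ℝ, Measurable φ → (∃ C, ∀ z, |φ z| ≤ C) →
      ∫ ω, (if Y ω then (1:ℝ) else 0) * φ (X ω, S ω) ∂P
        = ∫ ω, η (X ω) (S ω) * φ (X ω, S ω) ∂P)
    (m1 m0 : ℝ)
    (hm1 : m1 = ∫ ω, η (X ω) true ∂(ProbabilityTheory.cond P {ω | S ω = true}))
    (hm0 : m0 = ∫ ω, η (X ω) false ∂(ProbabilityTheory.cond P {ω | S ω = false}))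
    (hm1pos : 0 < m1) (hm0pos : 0 < m0)
    -- the estimator
    (ηh : (Fin d → ℝ) → Bool → ℝ)
    (hηhm : Measurable (fun p : (Fin d → ℝ) × Bool => ηh p.1 p.2))
    (hηh01 : ∀ x s, ηh x s ∈ Icc (0:ℝ) 1)
    (mh1 mh0 : ℝ)
    (hmh1 : mh1 = ∫ ω, ηh (X ω) true ∂(ProbabilityTheory.cond P {ω | S ω = true}))
    (hmh0 : mh0 = ∫ ω, ηh (X ω) false ∂(ProbabilityTheory.cond P {ω | S ω = false}))
    (hmh1pos : 0 < mh1) (hmh0pos : 0 < mh0)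
    (hatom : ∀ s : Bool, ∀ t ∈ Ioc (0:ℝ) 1,
      ProbabilityTheory.cond P {ω | S ω = s} {ω | ηh (X ω) s = t} = 0)
    -- the auxiliary (empirical) measures
    (ν1 ν0 : Measure (Fin d → ℝ))
    [IsProbabilityMeasure ν1] [IsProbabilityMeasure ν0]
    (hν1pos : 0 < ∫ x, ηh x true ∂ν1) (hν0pos : 0 < ∫ x, ηh x false ∂ν0)
    (ph1 ph0 : ℝ) (hph1 : 0 < ph1) (hph0 : 0 < ph0)
    -- the family of plug-in classifiers
    (G : ℝ → (Fin d → ℝ) → Bool → Bool)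
    (hGdef : ∀ θ x, (G θ x true = true ↔ 1 ≤ ηh x true * (2 - θ / ph1))
        ∧ (G θ x false = true ↔ 1 ≤ ηh x false * (2 + θ / ph0)))
    (Δ : ℝ → ℝ)
    (hΔ : ∀ θ, Δ θ =
      |(∫ x, ηh x true * (if G θ x true then (1:ℝ) else 0) ∂ν1) / (∫ x, ηh x true ∂ν1)
        - (∫ x, ηh x false * (if G θ x false then (1:ℝ) else 0) ∂ν0)
            / (∫ x, ηh x false ∂ν0)|)
    (θh : ℝ) (hθh : ∀ θ : ℝ, Δ θh ≤ Δ θ) :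
    |(ProbabilityTheory.cond P {ω | S ω = true ∧ Y ω = true}
        {ω | G θh (X ω) (S ω) = true}).toReal
      - (ProbabilityTheory.cond P {ω | S ω = false ∧ Y ω = true}
          {ω | G θh (X ω) (S ω) = true}).toReal|
      ≤ 2 * ((∫ ω, |η (X ω) true - ηh (X ω) true|
              ∂(ProbabilityTheory.cond P {ω | S ω = true})) / m1
            + (∫ ω, |η (X ω) false - ηh (X ω) false|
              ∂(ProbabilityTheory.cond P {ω | S ω = false})) / m0)
        + 4 * ((⨆ t ∈ Icc (0:ℝ) 1,
              |(∫ ω, ηh (X ω) true * (if t ≤ ηh (X ω) true then (1:ℝ) else 0)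
                  ∂(ProbabilityTheory.cond P {ω | S ω = true}))
                - (∫ x, ηh x true * (if t ≤ ηh x true then (1:ℝ) else 0) ∂ν1)|) / mh1
            + (⨆ t ∈ Icc (0:ℝ) 1,
              |(∫ ω, ηh (X ω) false * (if t ≤ ηh (X ω) false then (1:ℝ) else 0)
                  ∂(ProbabilityTheory.cond P {ω | S ω = false}))
                - (∫ x, ηh x false * (if t ≤ ηh x false then (1:ℝ) else 0) ∂ν0)|) / mh0) := by
  classical
  -- basic measurability and positivity facts
  have hS1m : MeasurableSet {ω | S ω = true} := hS (measurableSet_singleton true)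
  have hPS1 : P {ω | S ω = true} ≠ 0 := hSnd.1.ne'
  have hfalse_eq : {ω | S ω = false} = {ω | S ω = true}ᶜ := by
    ext ω; cases h : S ω <;> simp [h]
  have hPS0 : P {ω | S ω = false} ≠ 0 := by
    rw [hfalse_eq, prob_compl_eq_one_sub hS1m]
    exact (tsub_pos_iff_lt.2 hSnd.2).ne'
  haveI i1 : IsProbabilityMeasure (ProbabilityTheory.cond P {ω | S ω = true}) :=
    cond_isProbabilityMeasure hPS1
  haveI i0 : IsProbabilityMeasure (ProbabilityTheory.cond P {ω | S ω = false}) :=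
    cond_isProbabilityMeasure hPS0
  -- the main identity for the two conditional probabilities
  have main_eq : ∀ (s : Bool) (ms : ℝ), 0 < ms →
      ms = ∫ ω, η (X ω) s ∂(ProbabilityTheory.cond P {ω | S ω = s}) →
      P {ω | S ω = s} ≠ 0 →
      (ProbabilityTheory.cond P {ω | S ω = s ∧ Y ω = true}
          {ω | G θh (X ω) (S ω) = true}).toReal
        = (∫ ω, η (X ω) s * (if G θh (X ω) s then (1:ℝ) else 0)
            ∂(ProbabilityTheory.cond P {ω | S ω = s})) / ms := by
    intro s ms hms hmseq hPSs
    set cs : ℝ := if s = true then 2 - θh/ph1 else 2 + θh/ph0 with hcs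
    have hticket : ∀ x, (G θh x s = true) ↔ (1 ≤ ηh x s * cs) := by
      intro x; cases s
      · simpa [hcs] using (hGdef θh x).2
      · simpa [hcs] using (hGdef θh x).1
    have hSSm : MeasurableSet {ω | S ω = s} := hS (measurableSet_singleton s)
    have hAm : MeasurableSet {ω | S ω = s ∧ Y ω = true} :=
      hSSm.inter (hY (measurableSet_singleton true))
    have hqsm : Measurable fun ω => ηh (X ω) s := hηhm.comp (hX.prodMk measurable_const)
    have hPSSr : 0 < (P {ω | S ω = s}).toReal :=
      ENNReal.toReal_pos hPSs (measure_ne_top _ _)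
    have hden : (P {ω | S ω = s ∧ Y ω = true}).toReal = (P {ω | S ω = s}).toReal * ms := by
      have hφm : Measurable fun z : (Fin d → ℝ) × Bool => if z.2 = s then (1:ℝ) else 0 :=
        Measurable.ite (measurable_snd (measurableSet_singleton s))
          measurable_const measurable_const
      have hreg' : ∫ ω, (if Y ω then (1:ℝ) else 0) * (if S ω = s then (1:ℝ) else 0) ∂P
          = ∫ ω, η (X ω) (S ω) * (if S ω = s then (1:ℝ) else 0) ∂P :=
        hreg _ hφm ⟨1, fun z => by split <;> norm_num⟩
      have hL : ∫ ω, (if Y ω then (1:ℝ) else 0) * (if S ω = s then (1:ℝ) else 0) ∂P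
          = (P {ω | S ω = s ∧ Y ω = true}).toReal := by
        rw [← measureReal_def, ← integral_indicator_one hAm]
        congr 1; funext ω
        rw [Set.indicator_apply]
        by_cases h1 : Y ω = true <;> by_cases h2 : S ω = s <;>
          simp [h1, h2, mem_setOf_eq]
      have hR : ∫ ω, η (X ω) (S ω) * (if S ω = s then (1:ℝ) else 0) ∂P
          = (P {ω | S ω = s}).toReal * ms := by
        have e1 : (fun ω => η (X ω) (S ω) * (if S ω = s then (1:ℝ) else 0))
            = ({ω | S ω = s}).indicator (fun ω => η (X ω) s) := by
          funext ω
          rw [Set.indicator_apply]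
          by_cases h2 : S ω = s
          · rw [if_pos h2, if_pos (show ω ∈ {ω | S ω = s} from h2), h2, mul_one]
          · rw [if_neg h2, if_neg (show ω ∉ {ω | S ω = s} from h2), mul_zero]
        rw [e1, integral_indicator hSSm, hmseq, ll_integral_cond]
        field_simp
      rw [← hL, hreg', hR]
    have hnum : (P ({ω | S ω = s ∧ Y ω = true} ∩ {ω | G θh (X ω) (S ω) = true})).toReal
        = (P {ω | S ω = s}).toReal
          * ∫ ω, η (X ω) s * (if G θh (X ω) s then (1:ℝ) else 0)
              ∂(ProbabilityTheory.cond P {ω | S ω = s}) := by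
      have hABeq : {ω | S ω = s ∧ Y ω = true} ∩ {ω | G θh (X ω) (S ω) = true}
          = {ω | S ω = s ∧ Y ω = true} ∩ {ω | 1 ≤ ηh (X ω) s * cs} := by
        ext ω
        simp only [mem_inter_iff, mem_setOf_eq]
        constructor
        · rintro ⟨⟨h2, h1⟩, h3⟩
          rw [h2] at h3
          exact ⟨⟨h2, h1⟩, (hticket _).1 h3⟩
        · rintro ⟨⟨h2, h1⟩, h3⟩
          refine ⟨⟨h2, h1⟩, ?_⟩
          rw [h2]
          exact (hticket _).2 h3
      have hABm : MeasurableSet ({ω | S ω = s ∧ Y ω = true} ∩ {ω | 1 ≤ ηh (X ω) s * cs}) :=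
        hAm.inter (measurableSet_le measurable_const (hqsm.mul_const cs))
      have hφm : Measurable fun z : (Fin d → ℝ) × Bool =>
          if (z.2 = s ∧ 1 ≤ ηh z.1 s * cs) then (1:ℝ) else 0 := by
        apply Measurable.ite _ measurable_const measurable_const
        exact (measurable_snd (measurableSet_singleton s)).inter
          (measurableSet_le measurable_const
            ((hηhm.comp (measurable_fst.prodMk measurable_const)).mul_const cs))
      have hreg' : ∫ ω, (if Y ω then (1:ℝ) else 0)
            * (if (S ω = s ∧ 1 ≤ ηh (X ω) s * cs) then (1:ℝ) else 0) ∂P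
          = ∫ ω, η (X ω) (S ω)
            * (if (S ω = s ∧ 1 ≤ ηh (X ω) s * cs) then (1:ℝ) else 0) ∂P :=
        hreg _ hφm ⟨1, fun z => by split <;> norm_num⟩
      have hL : ∫ ω, (if Y ω then (1:ℝ) else 0)
            * (if (S ω = s ∧ 1 ≤ ηh (X ω) s * cs) then (1:ℝ) else 0) ∂P
          = (P ({ω | S ω = s ∧ Y ω = true} ∩ {ω | 1 ≤ ηh (X ω) s * cs})).toReal := by
        rw [← measureReal_def, ← integral_indicator_one hABm]
        congr 1; funext ω
        rw [Set.indicator_apply]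
        by_cases h1 : Y ω = true <;> by_cases h2 : S ω = s <;>
            by_cases h3 : 1 ≤ ηh (X ω) s * cs <;>
          simp [h1, h2, h3, mem_inter_iff, mem_setOf_eq]
      have hR : ∫ ω, η (X ω) (S ω)
            * (if (S ω = s ∧ 1 ≤ ηh (X ω) s * cs) then (1:ℝ) else 0) ∂P
          = (P {ω | S ω = s}).toReal
            * ∫ ω, η (X ω) s * (if G θh (X ω) s then (1:ℝ) else 0)
                ∂(ProbabilityTheory.cond P {ω | S ω = s}) := by
        have e1 : (fun ω => η (X ω) (S ω)
              * (if (S ω = s ∧ 1 ≤ ηh (X ω) s * cs) then (1:ℝ) else 0))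
            = ({ω | S ω = s}).indicator
                (fun ω => η (X ω) s * (if G θh (X ω) s then (1:ℝ) else 0)) := by
          funext ω
          rw [Set.indicator_apply]
          by_cases h2 : S ω = s
          · rw [if_pos (show ω ∈ {ω | S ω = s} from h2), h2]
            congr 1
            by_cases h3 : 1 ≤ ηh (X ω) s * cs
            · rw [if_pos ⟨rfl, h3⟩, if_pos ((hticket _).2 h3)]
            · rw [if_neg (fun hc => h3 hc.2), if_neg (fun hg => h3 ((hticket _).1 hg))]
          · rw [if_neg (show ω ∉ {ω | S ω = s} from h2), if_neg (fun hc => h2 hc.1),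
              mul_zero]
        rw [e1, integral_indicator hSSm, ll_integral_cond]
        field_simp
      rw [hABeq, ← hL, hreg', hR]
    rw [cond_apply hAm, ENNReal.toReal_mul, ENNReal.toReal_inv, hden, hnum]
    field_simp
  rw [main_eq true m1 hm1pos hm1 hPS1, main_eq false m0 hm0pos hm0 hPS0]
  -- convert the G-indicators into threshold indicators
  have hGif1 : ∀ (θ : ℝ) (x : Fin d → ℝ), (if G θ x true then (1:ℝ) else 0)
      = (if 1 ≤ ηh x true * (2 - θ/ph1) then (1:ℝ) else 0) := by
    intro θ x
    by_cases hc : 1 ≤ ηh x true * (2 - θ/ph1)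
    · rw [if_pos ((hGdef θ x).1.mpr hc), if_pos hc]
    · rw [if_neg (fun hg => hc ((hGdef θ x).1.mp hg)), if_neg hc]
  have hGif0 : ∀ (θ : ℝ) (x : Fin d → ℝ), (if G θ x false then (1:ℝ) else 0)
      = (if 1 ≤ ηh x false * (2 + θ/ph0) then (1:ℝ) else 0) := by
    intro θ x
    by_cases hc : 1 ≤ ηh x false * (2 + θ/ph0)
    · rw [if_pos ((hGdef θ x).2.mpr hc), if_pos hc]
    · rw [if_neg (fun hg => hc ((hGdef θ x).2.mp hg)), if_neg hc]
  have hconvμ1 : (∫ ω, η (X ω) true * (if G θh (X ω) true then (1:ℝ) else 0)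
        ∂(ProbabilityTheory.cond P {ω | S ω = true}))
      = ∫ ω, η (X ω) true * (if 1 ≤ ηh (X ω) true * (2 - θh/ph1) then (1:ℝ) else 0)
        ∂(ProbabilityTheory.cond P {ω | S ω = true}) := by
    congr 1; funext ω; rw [hGif1 θh (X ω)]
  have hconvμ0 : (∫ ω, η (X ω) false * (if G θh (X ω) false then (1:ℝ) else 0)
        ∂(ProbabilityTheory.cond P {ω | S ω = false}))
      = ∫ ω, η (X ω) false * (if 1 ≤ ηh (X ω) false * (2 + θh/ph0) then (1:ℝ) else 0)
        ∂(ProbabilityTheory.cond P {ω | S ω = false}) := by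
    congr 1; funext ω; rw [hGif0 θh (X ω)]
  rw [hconvμ1, hconvμ0]
  -- convert the minimality hypothesis
  have hθh' : ∀ θ : ℝ,
      |(∫ x, ηh x true * (if 1 ≤ ηh x true * (2 - θh/ph1) then (1:ℝ) else 0) ∂ν1)
          / (∫ x, ηh x true ∂ν1)
        - (∫ x, ηh x false * (if 1 ≤ ηh x false * (2 + θh/ph0) then (1:ℝ) else 0) ∂ν0)
            / (∫ x, ηh x false ∂ν0)|
      ≤ |(∫ x, ηh x true * (if 1 ≤ ηh x true * (2 - θ/ph1) then (1:ℝ) else 0) ∂ν1)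
          / (∫ x, ηh x true ∂ν1)
        - (∫ x, ηh x false * (if 1 ≤ ηh x false * (2 + θ/ph0) then (1:ℝ) else 0) ∂ν0)
            / (∫ x, ηh x false ∂ν0)| := by
    intro θ
    have h := hθh θ
    rw [hΔ θh, hΔ θ] at h
    have c1 : ∀ (θ' : ℝ), (∫ x, ηh x true * (if G θ' x true then (1:ℝ) else 0) ∂ν1)
        = ∫ x, ηh x true * (if 1 ≤ ηh x true * (2 - θ'/ph1) then (1:ℝ) else 0) ∂ν1 := by
      intro θ'; congr 1; funext x; rw [hGif1 θ' x]
    have c0 : ∀ (θ' : ℝ), (∫ x, ηh x false * (if G θ' x false then (1:ℝ) else 0) ∂ν0)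
        = ∫ x, ηh x false * (if 1 ≤ ηh x false * (2 + θ'/ph0) then (1:ℝ) else 0) ∂ν0 := by
      intro θ'; congr 1; funext x; rw [hGif0 θ' x]
    rwa [c1 θh, c0 θh, c1 θ, c0 θ] at h
  -- apply the abstract analysis lemma
  exact ll_analysis (ProbabilityTheory.cond P {ω | S ω = true})
    (ProbabilityTheory.cond P {ω | S ω = false}) ν1 ν0
    (hηm.comp (hX.prodMk measurable_const)) (hηm.comp (hX.prodMk measurable_const))
    (hηhm.comp (hX.prodMk measurable_const)) (hηhm.comp (hX.prodMk measurable_const))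
    (hηhm.comp (measurable_id.prodMk measurable_const))
    (hηhm.comp (measurable_id.prodMk measurable_const))
    (fun ω => hη01 _ _) (fun ω => hη01 _ _) (fun ω => hηh01 _ _) (fun ω => hηh01 _ _)
    (fun x => hηh01 _ _) (fun x => hηh01 _ _)
    (fun t ht => hatom true t ht) (fun t ht => hatom false t ht)
    m1 m0 mh1 mh0 ph1 ph0 hm1 hm0 hmh1 hmh0
    hm1pos hm0pos hmh1pos hmh0pos hph1 hph0 hν1pos hν0pos θh hθh'
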